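/- Let P : M → A be a homogeneous polynomial of degree k that is left monogenic (∂̄_B P = 0). Then P admits the Fueter representation P(x) = ∑_{|k|=k} P_k(x) a_k with coefficients a_k = ∂_k P(0) ∈ A, where ∂_k = ∂^{k}/∂x₁^{k₁}⋯∂x_m^{k_m} and P_k are the Fueter polynomials. -/

import Mathlib

set_option linter.unusedSectionVars false
namespace FueterAux


variable {A : Type*} [NormedAddCommGroup A] [NormedSpace ℝ A]
variable (μ : A →L[ℝ] A →L[ℝ] A) (e : A)

noncomputable def fassoc (a b c : A) : A := μ (μ a b) c - μ a (μ b c)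

noncomputable def rpow (y : A) : ℕ → A
  | 0 => e
  | n+1 => μ y (rpow y n)

section
variable (he : ∀ a : A, μ e a = a ∧ μ a e = a)
  (hLA : ∀ a b : A, μ (μ a a) b = μ a (μ a b))
  (hRA : ∀ a b : A, μ (μ a b) b = μ a (μ b b))

include hLA in
lemma fassoc_swap1 (a b c : A) : fassoc μ a b c = - fassoc μ b a c := by
  have h := hLA (a + b) c
  simp only [map_add, ContinuousLinearMap.add_apply] at h
  simp only [fassoc]
  linear_combination (norm := module) h - hLA a c - hLA b c

include hRA in
lemma fassoc_swap2 (a b c : A) : fassoc μ a b c = - fassoc μ a c b := by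
  have h := hRA a (b + c)
  simp only [map_add, ContinuousLinearMap.add_apply] at h
  simp only [fassoc]
  linear_combination (norm := module) h - hRA a b - hRA a c

lemma teich (a b c d : A) :
    fassoc μ (μ a b) c d - fassoc μ a (μ b c) d + fassoc μ a b (μ c d)
      = μ a (fassoc μ b c d) + μ (fassoc μ a b c) d := by
  simp only [fassoc, map_sub, ContinuousLinearMap.sub_apply]
  abel

include he hLA hRA in
lemma rpow_key (y : A) :
    ∀ n : ℕ, (∀ b, fassoc μ y (rpow μ e y n) b = 0) ∧
      μ (rpow μ e y n) y = μ y (rpow μ e y n) := by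
  intro n
  induction n with
  | zero =>
    constructor
    · intro b
      simp [fassoc, rpow, (he y).2, (he (μ y b)).1, (he b).1]
    · simp [rpow, (he y).1, (he y).2]
  | succ n ih =>
    obtain ⟨ih1, ih2⟩ := ih
    have hcomm : μ (rpow μ e y (n+1)) y = μ y (rpow μ e y (n+1)) := by
      show μ (μ y (rpow μ e y n)) y = μ y (rpow μ e y (n+1))
      have h0 := ih1 y
      simp only [fassoc, sub_eq_zero] at h0
      rw [h0, ih2]
      rfl
    refine ⟨?_, hcomm⟩
    intro b
    -- X := fassoc μ y (rpow (n+1)) b;  teichmüller with (y, rpow n, y, b)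
    have ht := teich μ y (rpow μ e y n) y b
    have e1 : fassoc μ (rpow μ e y n) y b = 0 := by
      rw [fassoc_swap1 μ hLA]
      rw [ih1 b]
      simp
    have e2 : fassoc μ y (rpow μ e y n) (μ y b) = 0 := ih1 (μ y b)
    have e3 : fassoc μ y (rpow μ e y n) y = 0 := ih1 y
    rw [e1, e2, e3] at ht
    simp only [map_zero, ContinuousLinearMap.zero_apply, add_zero,
      ContinuousLinearMap.map_zero, zero_add, sub_zero] at ht
    rw [ih2] at ht
    -- now ht : fassoc μ (μ y (rpow n)) y b - fassoc μ y (μ y (rpow n)) b = 0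
    have hswap := fassoc_swap1 μ hLA (μ y (rpow μ e y n)) y b
    have hX : fassoc μ y (rpow μ e y (n+1)) b
        = fassoc μ y (μ y (rpow μ e y n)) b := rfl
    rw [hX]
    have hXX : fassoc μ y (μ y (rpow μ e y n)) b
        = - fassoc μ y (μ y (rpow μ e y n)) b :=
      (sub_eq_zero.mp ht).symm.trans hswap
    have h2 : (2:ℝ) • fassoc μ y (μ y (rpow μ e y n)) b = 0 := by
      rw [two_smul, add_eq_zero_iff_eq_neg]; exact hXX
    rcases smul_eq_zero.mp h2 with h2 | h2
    · norm_num at h2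
    · exact h2

include he hLA hRA in
lemma mu_rpow (y : A) : ∀ (n : ℕ) (b : A),
    μ (rpow μ e y n) b = (fun a => μ y a)^[n] b := by
  intro n
  induction n with
  | zero => intro b; simp [rpow, (he b).1]
  | succ n ih =>
    intro b
    have h0 := (rpow_key μ e he hLA hRA y n).1 b
    simp only [fassoc, sub_eq_zero] at h0
    show μ (μ y (rpow μ e y n)) b = _
    rw [h0, ih b]
    exact (Function.iterate_succ_apply' _ n b).symm

end


open Finset

variable {m : ℕ}

def Sk (m k : ℕ) : Finset (Fin m → ℕ) :=
  Finset.filter (fun κ => ∑ s, κ s = k)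
    (Fintype.piFinset fun _ : Fin m => Finset.range (k + 1))

lemma mem_Sk {k : ℕ} {κ : Fin m → ℕ} : κ ∈ Sk m k ↔ ∑ s, κ s = k := by
  constructor
  · intro h; exact (Finset.mem_filter.mp h).2
  · intro h
    refine Finset.mem_filter.mpr ⟨Fintype.mem_piFinset.mpr fun s => ?_, h⟩
    rw [Finset.mem_range]
    have : κ s ≤ ∑ t, κ t := Finset.single_le_sum (fun t _ => Nat.zero_le _) (Finset.mem_univ s)
    omega

def canonList (κ : Fin m → ℕ) : List (Fin (m+1)) :=
  (List.finRange m).flatMap fun j => List.replicate (κ j) j.succ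

lemma length_canonList (κ : Fin m → ℕ) : (canonList κ).length = ∑ s, κ s := by
  rw [canonList, List.length_flatMap, Fin.sum_univ_def]
  congr 1
  simp [Function.comp]

lemma count_canonList (κ : Fin m → ℕ) (i : Fin m) :
    (canonList κ).count i.succ = κ i := by
  rw [canonList, List.count_flatMap, ← Fin.sum_univ_def]
  have : ∀ j : Fin m, (List.count i.succ ∘ fun j => List.replicate (κ j) j.succ) j
      = if j = i then κ j else 0 := by
    intro j
    simp only [Function.comp, List.count_replicate]
    by_cases h : j = i
    · subst h; simp
    · have : ¬ (i.succ == j.succ) = true := by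
        simp only [beq_iff_eq]
        exact fun hc => h (Fin.succ_injective _ hc).symm
      simp [h, this]
  rw [Finset.sum_congr rfl (fun j _ => this j)]
  simp

lemma mem_canonList {κ : Fin m → ℕ} {i : Fin (m+1)} :
    i ∈ canonList κ ↔ ∃ j : Fin m, i = j.succ ∧ κ j ≠ 0 := by
  rw [canonList]
  simp only [List.mem_flatMap, List.mem_finRange, List.mem_replicate, true_and]
  constructor
  · rintro ⟨j, hj1, hj2⟩; exact ⟨j, hj2, hj1⟩
  · rintro ⟨j, h1, h2⟩; exact ⟨j, h2, h1⟩

lemma canonList_erase_perm {κ : Fin m → ℕ} {j : Fin m} (hj : κ j ≠ 0) :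
    ((canonList κ).erase j.succ).Perm (canonList (κ - Pi.single j 1)) := by
  rw [List.perm_iff_count]
  intro i
  rcases Fin.eq_zero_or_eq_succ i with h0 | ⟨i', rfl⟩
  · subst h0
    have hz : ∀ (κ' : Fin m → ℕ), (canonList (m := m) κ').count (0 : Fin (m+1)) = 0 := by
      intro κ'
      rw [List.count_eq_zero]
      intro hc
      rcases mem_canonList.mp hc with ⟨j', hj', _⟩
      exact (Fin.succ_ne_zero j') hj'.symm
    rw [List.count_erase_of_ne (by exact fun hc => (Fin.succ_ne_zero j) hc.symm), hz, hz]
  · rw [List.count_erase, count_canonList, count_canonList]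
    by_cases h : i' = j
    · subst h
      simp [Pi.sub_apply, Pi.single_eq_same]
    · have : ¬ ((j.succ == i'.succ) = true) := by
        simp only [beq_iff_eq]
        exact fun hc => h (Fin.succ_injective _ hc).symm
      simp only [this, if_false]
      simp [Pi.sub_apply, Pi.single_eq_of_ne h]

def permsOf (L : List (Fin (m+1))) : Finset (List (Fin (m+1))) := L.permutations.toFinset

lemma mem_permsOf {L l : List (Fin (m+1))} : l ∈ permsOf L ↔ l.Perm L := by
  simp [permsOf, List.mem_toFinset, List.mem_permutations]

lemma permsOf_congr {L L' : List (Fin (m+1))} (h : L.Perm L') : permsOf L = permsOf L' := by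
  ext l
  simp only [mem_permsOf]
  exact ⟨fun h' => h'.trans h, fun h' => h'.trans h.symm⟩

lemma permsOf_group {M : Type*} [AddCommMonoid M] (L : List (Fin (m+1))) (hL : L ≠ [])
    (f : List (Fin (m+1)) → M) :
    ∑ l ∈ permsOf L, f l
      = ∑ a ∈ L.toFinset, ∑ t ∈ permsOf (L.erase a), f (a :: t) := by
  have hbU : permsOf L = L.toFinset.biUnion
      (fun a => (permsOf (L.erase a)).image (a :: ·)) := by
    ext l
    simp only [mem_permsOf, Finset.mem_biUnion, Finset.mem_image, List.mem_toFinset]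
    constructor
    · intro hl
      match l, hl with
      | [], hl => exact absurd (hl.symm.eq_nil ▸ rfl : L = []) hL
      | a :: t, hl =>
        rw [List.cons_perm_iff_perm_erase] at hl
        exact ⟨a, hl.1, t, hl.2, rfl⟩
    · rintro ⟨a, ha, t, ht, rfl⟩
      exact List.cons_perm_iff_perm_erase.mpr ⟨ha, ht⟩
  rw [hbU, Finset.sum_biUnion, ]
  · apply Finset.sum_congr rfl
    intro a _
    rw [Finset.sum_image]
    intro x _ y _ hxy
    exact List.tail_eq_of_cons_eq hxy
  · intro a ha b hb hab
    apply Finset.disjoint_left.mpr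
    rintro l hla hlb
    rcases Finset.mem_image.mp hla with ⟨t, _, rfl⟩
    rcases Finset.mem_image.mp hlb with ⟨t', _, h'⟩
    exact hab (List.head_eq_of_cons_eq h').symm

  -- dev only; will merge
open Finset

section
variable {m : ℕ} {A : Type*} [NormedAddCommGroup A] [NormedSpace ℝ A]


-- single-index arithmetic
lemma sub_single_add {κ : Fin m → ℕ} {j : Fin m} (h : κ j ≠ 0) :
    κ - Pi.single j 1 + Pi.single j 1 = κ := by
  funext i
  by_cases hij : i = j
  · subst hij; simp only [Pi.add_apply, Pi.sub_apply, Pi.single_eq_same]; omega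
  · simp [Pi.single_eq_of_ne hij]

lemma add_single_sub (κ : Fin m → ℕ) (j : Fin m) :
    κ + Pi.single j 1 - Pi.single j 1 = κ := by
  funext i
  by_cases hij : i = j
  · subst hij; simp only [Pi.sub_apply, Pi.add_apply, Pi.single_eq_same]; omega
  · simp [Pi.single_eq_of_ne hij]

lemma sum_add_single (κ : Fin m → ℕ) (j : Fin m) :
    ∑ s, (κ + Pi.single j 1 : Fin m → ℕ) s = (∑ s, κ s) + 1 := by
  simp only [Pi.add_apply]
  rw [Finset.sum_add_distrib, Finset.sum_pi_single']
  simp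

lemma sum_sub_single {κ : Fin m → ℕ} {j : Fin m} (h : κ j ≠ 0) :
    ∑ s, (κ - Pi.single j 1 : Fin m → ℕ) s = (∑ s, κ s) - 1 := by
  have h2 := sum_add_single (κ - Pi.single j 1) j
  rw [sub_single_add h] at h2
  omega

end

section RXsec
variable {m : ℕ}

lemma RX {M : Type*} [AddCommMonoid M] (n : ℕ) (g : Fin m → (Fin m → ℕ) → M) :
    ∑ κ ∈ Sk m (n+1), ∑ j ∈ Finset.univ.filter (fun j => κ j ≠ 0), g j (κ - Pi.single j 1)
      = ∑ j : Fin m, ∑ κ ∈ Sk m n, g j κ := by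
  rw [Finset.sum_sigma', Finset.sum_sigma']
  refine Finset.sum_nbij' (fun p => ⟨p.2, p.1 - Pi.single p.2 1⟩)
    (fun p => ⟨p.2 + Pi.single p.1 1, p.1⟩) ?_ ?_ ?_ ?_ ?_
  · rintro ⟨κ, j⟩ hp
    simp only [Finset.mem_sigma, Finset.mem_filter, Finset.mem_univ, true_and] at hp ⊢
    obtain ⟨h1, h2⟩ := hp
    have hs := sum_sub_single (κ := κ) (j := j) h2
    rw [mem_Sk] at h1 ⊢
    omega
  · rintro ⟨j, κ⟩ hp
    simp only [Finset.mem_sigma, Finset.mem_univ, true_and, Finset.mem_filter] at hp ⊢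
    rw [mem_Sk] at hp ⊢
    have hs := sum_add_single κ j
    constructor
    · omega
    · simp only [Pi.add_apply, Pi.single_eq_same]
      omega
  · rintro ⟨κ, j⟩ hp
    simp only [Finset.mem_sigma, Finset.mem_filter, Finset.mem_univ, true_and] at hp
    have h2 := sub_single_add hp.2
    show (⟨κ - Pi.single j 1 + Pi.single j 1, j⟩ : (_ : Fin m → ℕ) × Fin m) = ⟨κ, j⟩
    rw [h2]
  · rintro ⟨j, κ⟩ hp
    show (⟨j, κ + Pi.single j 1 - Pi.single j 1⟩ : (_ : Fin m) × (Fin m → ℕ)) = ⟨j, κ⟩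
    rw [add_single_sub]
  · rintro ⟨κ, j⟩ hp
    rfl

lemma tpow {κ : Fin m → ℕ} {j : Fin m} (h : κ j ≠ 0) (t : Fin m → ℝ) :
    t j * ∏ i, t i ^ ((κ - Pi.single j 1 : Fin m → ℕ) i) = ∏ i, t i ^ κ i := by
  rw [← Finset.mul_prod_erase Finset.univ _ (Finset.mem_univ j),
      ← Finset.mul_prod_erase Finset.univ (fun i => t i ^ κ i) (Finset.mem_univ j), ← mul_assoc]
  have h1 : (κ - Pi.single j 1 : Fin m → ℕ) j = κ j - 1 := by simp
  have h2 : t j * t j ^ (κ j - 1) = t j ^ κ j := by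
    rw [← pow_succ']
    congr 1
    omega
  rw [h1, h2]
  congr 1
  apply Finset.prod_congr rfl
  intro i hi
  have : i ≠ j := (Finset.mem_erase.mp hi).1
  simp [Pi.single_eq_of_ne this]

end RXsec

section SBsec
variable {m : ℕ} {A : Type*} [NormedAddCommGroup A] [NormedSpace ℝ A]
variable (μ : A →L[ℝ] A →L[ℝ] A) (e : A) (v : Fin (m+1) → A) (x : Fin (m+1) → ℝ)

/-- symmetrized fold with seed -/
noncomputable def SB (κ : Fin m → ℕ) (b : A) : A :=
  ∑ l' ∈ permsOf (canonList κ),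
    (l'.map (fun i => x i • e - x 0 • v i)).foldr (fun a b => μ a b) b

lemma SB_zero {κ : Fin m → ℕ} (h : ∑ s, κ s = 0) (b : A) : SB μ e v x κ b = b := by
  have hlen : canonList κ = [] := by
    apply List.eq_nil_of_length_eq_zero
    rw [length_canonList, h]
  rw [SB, hlen]
  have : permsOf (m := m) [] = {[]} := by
    ext l
    rw [mem_permsOf]
    simp [List.perm_nil]
  rw [this, Finset.sum_singleton]
  rfl

lemma SB_rec {κ : Fin m → ℕ} (h : 0 < ∑ s, κ s) (b : A) :
    SB μ e v x κ b = ∑ j ∈ Finset.univ.filter (fun j => κ j ≠ 0),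
      μ (x j.succ • e - x 0 • v j.succ) (SB μ e v x (κ - Pi.single j 1) b) := by
  have hL : canonList κ ≠ [] := by
    intro hc
    have := length_canonList κ
    rw [hc] at this
    simp at this
    omega
  rw [SB, permsOf_group _ hL]
  have htf : (canonList κ).toFinset
      = (Finset.univ.filter (fun j : Fin m => κ j ≠ 0)).image Fin.succ := by
    ext i
    simp only [List.mem_toFinset, mem_canonList, Finset.mem_image, Finset.mem_filter,
      Finset.mem_univ, true_and]
    constructor
    · rintro ⟨j, rfl, hj⟩; exact ⟨j, hj, rfl⟩
    · rintro ⟨j, hj, rfl⟩; exact ⟨j, rfl, hj⟩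
  rw [htf, Finset.sum_image (fun a _ b _ h => Fin.succ_injective _ h)]
  apply Finset.sum_congr rfl
  intro j hj
  have hperm := canonList_erase_perm (Finset.mem_filter.mp hj).2
  rw [permsOf_congr hperm]
  simp only [List.map_cons, List.foldr_cons]
  rw [← map_sum]
  rfl

end SBsec

section Expandsec
variable {m : ℕ} {A : Type*} [NormedAddCommGroup A] [NormedSpace ℝ A]
variable (μ : A →L[ℝ] A →L[ℝ] A) (e : A) (v : Fin (m+1) → A) (x : Fin (m+1) → ℝ)

lemma Sk_zero : Sk m 0 = {(fun _ => 0 : Fin m → ℕ)} := by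
  ext κ
  rw [mem_Sk, Finset.mem_singleton]
  constructor
  · intro h
    funext i
    exact Finset.sum_eq_zero_iff.mp h i (Finset.mem_univ i)
  · rintro rfl
    simp

lemma SB_expand (t : Fin m → ℝ) (k : ℕ) (b : A) :
    ∑ κ ∈ Sk m k, (∏ i, t i ^ κ i) • SB μ e v x κ b
      = (fun a => μ (∑ j : Fin m, t j • (x j.succ • e - x 0 • v j.succ)) a)^[k] b := by
  induction k with
  | zero =>
    rw [Sk_zero, Finset.sum_singleton, Function.iterate_zero_apply]
    rw [SB_zero μ e v x (by simp) b]
    simp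
  | succ k ih =>
    rw [Function.iterate_succ_apply', ← ih]
    have lhs_eq : ∑ κ ∈ Sk m (k+1), (∏ i, t i ^ κ i) • SB μ e v x κ b
        = ∑ j : Fin m, ∑ κ ∈ Sk m k,
            (t j * ∏ i, t i ^ κ i) • μ (x j.succ • e - x 0 • v j.succ) (SB μ e v x κ b) := by
      rw [← RX k (fun j κ' => (t j * ∏ i, t i ^ κ' i) •
        μ (x j.succ • e - x 0 • v j.succ) (SB μ e v x κ' b))]
      apply Finset.sum_congr rfl
      intro κ hκ
      have hk1 : ∑ s, κ s = k + 1 := mem_Sk.mp hκ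
      rw [SB_rec μ e v x (by omega) b, Finset.smul_sum]
      apply Finset.sum_congr rfl
      intro j hj
      have hj0 : κ j ≠ 0 := (Finset.mem_filter.mp hj).2
      rw [tpow hj0 t]
    rw [lhs_eq]
    rw [map_sum μ _ Finset.univ, ContinuousLinearMap.sum_apply]
    apply Finset.sum_congr rfl
    intro j _
    rw [map_smul μ, ContinuousLinearMap.smul_apply, map_sum, Finset.smul_sum]
    apply Finset.sum_congr rfl
    intro κ _
    rw [map_smul, smul_smul]

lemma rpow_eq_iter (y : A) (k : ℕ) :
    rpow μ e y k = (fun a => μ y a)^[k] e := by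
  induction k with
  | zero => rfl
  | succ k ih =>
    show μ y (rpow μ e y k) = _
    rw [ih, Function.iterate_succ_apply']

lemma extract (S : Finset (Fin m → ℕ)) (c : (Fin m → ℕ) → A)
    (h : ∀ t : Fin m → ℝ, ∑ κ ∈ S, (∏ i, t i ^ κ i) • c κ = 0) :
    ∀ κ ∈ S, c κ = 0 := by
  intro κ0 hκ0
  rw [← Module.forall_dual_apply_eq_zero_iff ℝ]
  intro φ
  classical
  set p : MvPolynomial (Fin m) ℝ :=
    ∑ κ ∈ S, MvPolynomial.monomial (Finsupp.equivFunOnFinite.symm κ) (φ (c κ)) with hp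
  have heval : ∀ tv : Fin m → ℝ, MvPolynomial.eval tv p = 0 := by
    intro tv
    rw [hp, map_sum]
    have : ∀ κ ∈ S, MvPolynomial.eval tv
        (MvPolynomial.monomial (Finsupp.equivFunOnFinite.symm κ) (φ (c κ)))
        = (∏ i, tv i ^ κ i) * φ (c κ) := by
      intro κ _
      rw [MvPolynomial.eval_monomial]
      rw [Finsupp.prod_fintype _ _ (fun i => pow_zero _)]
      simp only [Finsupp.coe_equivFunOnFinite_symm]
      ring
    rw [Finset.sum_congr rfl this]
    have := congrArg φ (h tv)
    rw [map_sum, map_zero] at this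
    rw [← this]
    apply Finset.sum_congr rfl
    intro κ _
    rw [map_smul]
    simp [smul_eq_mul]
  have hp0 : p = 0 := by
    apply MvPolynomial.funext
    intro tv
    rw [heval, map_zero]
  have hcoeff := congrArg (MvPolynomial.coeff (Finsupp.equivFunOnFinite.symm κ0)) hp0
  rw [hp] at hcoeff
  rw [MvPolynomial.coeff_zero] at hcoeff
  rw [MvPolynomial.coeff_sum] at hcoeff
  rw [Finset.sum_eq_single_of_mem κ0 hκ0] at hcoeff
  · rw [MvPolynomial.coeff_monomial, if_pos rfl] at hcoeff
    exact hcoeff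
  · intro κ hκ hne
    rw [MvPolynomial.coeff_monomial, if_neg]
    intro hc
    exact hne (Finsupp.equivFunOnFinite.symm.injective hc)

variable (he : ∀ a : A, μ e a = a ∧ μ a e = a)
  (hLA : ∀ a b : A, μ (μ a a) b = μ a (μ a b))
  (hRA : ∀ a b : A, μ (μ a b) b = μ a (μ b b))

include he hLA hRA in
lemma SB_mu (κ : Fin m → ℕ) (b : A) :
    SB μ e v x κ b = μ (SB μ e v x κ e) b := by
  have key : ∀ t : Fin m → ℝ, ∑ κ' ∈ Sk m (∑ s, κ s),
      (∏ i, t i ^ κ' i) • (SB μ e v x κ' b - μ (SB μ e v x κ' e) b) = 0 := by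
    intro t
    have h1 := SB_expand μ e v x t (∑ s, κ s) b
    have h2 := SB_expand μ e v x t (∑ s, κ s) e
    set y : A := ∑ j : Fin m, t j • (x j.succ • e - x 0 • v j.succ) with hy
    have h3 : (fun a => μ y a)^[∑ s, κ s] b = μ ((fun a => μ y a)^[∑ s, κ s] e) b := by
      rw [← rpow_eq_iter μ e y]
      exact (mu_rpow μ e he hLA hRA y _ b).symm
    have h4 : μ ((∑ κ' ∈ Sk m (∑ s, κ s), (∏ i, t i ^ κ' i) • SB μ e v x κ' e)) b
        = ∑ κ' ∈ Sk m (∑ s, κ s), (∏ i, t i ^ κ' i) • μ (SB μ e v x κ' e) b := by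
      rw [map_sum μ _ _, ContinuousLinearMap.sum_apply]
      apply Finset.sum_congr rfl
      intro κ' _
      rw [map_smul, ContinuousLinearMap.smul_apply]
    calc ∑ κ' ∈ Sk m (∑ s, κ s), (∏ i, t i ^ κ' i) • (SB μ e v x κ' b - μ (SB μ e v x κ' e) b)
        = ∑ κ' ∈ Sk m (∑ s, κ s), ((∏ i, t i ^ κ' i) • SB μ e v x κ' b
            - (∏ i, t i ^ κ' i) • μ (SB μ e v x κ' e) b) := by
          apply Finset.sum_congr rfl; intro κ' _; rw [smul_sub]
      _ = (∑ κ' ∈ Sk m (∑ s, κ s), (∏ i, t i ^ κ' i) • SB μ e v x κ' b)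
            - ∑ κ' ∈ Sk m (∑ s, κ s), (∏ i, t i ^ κ' i) • μ (SB μ e v x κ' e) b :=
          Finset.sum_sub_distrib _ _
      _ = 0 := by rw [h1, ← h4, h2, h3, sub_self]
  have := extract _ _ key κ (mem_Sk.mpr rfl)
  rw [sub_eq_zero] at this
  exact this

end Expandsec


section Analysis
variable {m : ℕ} {A : Type*} [NormedAddCommGroup A] [NormedSpace ℝ A]

/-- partial derivative in coordinate direction -/
noncomputable def pdf (w : Fin (m+1)) (f : (Fin (m+1) → ℝ) → A) : (Fin (m+1) → ℝ) → A :=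
  fun p => fderiv ℝ f p (Pi.single w 1)

lemma smooth_pdf {f : (Fin (m+1) → ℝ) → A} (hf : ContDiff ℝ ⊤ f) (w : Fin (m+1)) :
    ContDiff ℝ ⊤ (pdf w f) := by
  have h := (ContinuousLinearMap.apply ℝ A (Pi.single w 1)).contDiff.comp
    (hf.fderiv_right (le_top : (⊤ : WithTop ℕ∞) + 1 ≤ ⊤))
  exact h

lemma hasfderiv_pdf {f : (Fin (m+1) → ℝ) → A} (hf : ContDiff ℝ ⊤ f) (w : Fin (m+1))
    (x : Fin (m+1) → ℝ) :
    HasFDerivAt (pdf w f)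
      ((ContinuousLinearMap.apply ℝ A (Pi.single w 1)).comp
        (fderiv ℝ (fderiv ℝ f) x)) x := by
  have hd : DifferentiableAt ℝ (fderiv ℝ f) x :=
    ((hf.fderiv_right (le_top : (⊤ : WithTop ℕ∞) + 1 ≤ ⊤)).differentiable (by simp)) x
  exact (ContinuousLinearMap.apply ℝ A (Pi.single w 1)).hasFDerivAt.comp x hd.hasFDerivAt

lemma sndsymm {f : (Fin (m+1) → ℝ) → A} (hf : ContDiff ℝ ⊤ f) (x : Fin (m+1) → ℝ)
    (u w : Fin (m+1) → ℝ) :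
    fderiv ℝ (fderiv ℝ f) x u w = fderiv ℝ (fderiv ℝ f) x w u :=
  (hf.contDiffAt.isSymmSndFDerivAt le_top) u w

lemma pdf_comm {f : (Fin (m+1) → ℝ) → A} (hf : ContDiff ℝ ⊤ f) (a b : Fin (m+1)) :
    pdf a (pdf b f) = pdf b (pdf a f) := by
  funext x
  have h1 : ∀ (u v : Fin (m+1)), pdf u (pdf v f) x
      = fderiv ℝ (fderiv ℝ f) x (Pi.single u 1) (Pi.single v 1) := by
    intro u v
    show fderiv ℝ (pdf v f) x (Pi.single u 1) = _
    rw [(hasfderiv_pdf hf v x).fderiv]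
    rfl
  rw [h1, h1, sndsymm hf]

lemma euler {f : (Fin (m+1) → ℝ) → A} {k : ℕ} (hf : ContDiff ℝ ⊤ f)
    (hhom : ∀ (c : ℝ) (x : Fin (m+1) → ℝ), f (c • x) = c ^ k • f x) (x : Fin (m+1) → ℝ) :
    ∑ s, x s • pdf s f x = (k : ℝ) • f x := by
  have hdiff : ∀ y, HasFDerivAt f (fderiv ℝ f y) y := fun y =>
    ((hf.differentiable (by simp)) y).hasFDerivAt
  have h1 : HasDerivAt (fun c : ℝ => f (c • x)) (fderiv ℝ f ((1:ℝ) • x) x) 1 := by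
    have hc : HasDerivAt (fun c : ℝ => c • x) ((1:ℝ) • x) 1 := (hasDerivAt_id 1).smul_const x
    rw [one_smul] at hc
    exact (hdiff ((1:ℝ) • x)).comp_hasDerivAt 1 hc
  have h2 : HasDerivAt (fun c : ℝ => c ^ k • f x) (((k:ℝ) * 1 ^ (k-1)) • f x) 1 :=
    (hasDerivAt_pow k 1).smul_const (f x)
  have hfun : (fun c : ℝ => f (c • x)) = fun c : ℝ => c ^ k • f x := funext fun c => hhom c x
  rw [hfun] at h1
  have huniq := h1.unique h2
  rw [one_smul] at huniq
  have hx : fderiv ℝ f x x = (k:ℝ) • f x := by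
    rw [huniq]; norm_num
  have hxsum : x = ∑ s, x s • (Pi.single s 1 : Fin (m+1) → ℝ) := by
    conv_lhs => rw [pi_eq_sum_univ x]
    apply Finset.sum_congr rfl
    intro s _
    congr 1
    funext j
    rw [Pi.single_apply]
    simp [eq_comm]
  calc ∑ s, x s • pdf s f x = fderiv ℝ f x (∑ s, x s • (Pi.single s 1 : Fin (m+1) → ℝ)) := by
        rw [map_sum]
        apply Finset.sum_congr rfl
        intro s _
        rw [map_smul]
        rfl
    _ = fderiv ℝ f x x := by rw [← hxsum]
    _ = (k:ℝ) • f x := hx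

lemma hom_scale {f : (Fin (m+1) → ℝ) → A} {k : ℕ} (hf : ContDiff ℝ ⊤ f)
    (hhom : ∀ (c : ℝ) (x : Fin (m+1) → ℝ), f (c • x) = c ^ k • f x)
    (w : Fin (m+1)) (c : ℝ) (x : Fin (m+1) → ℝ) :
    c • pdf w f (c • x) = c ^ k • pdf w f x := by
  have hdiff : ∀ y, DifferentiableAt ℝ f y := fun y => (hf.differentiable (by simp)) y
  have hA : HasFDerivAt (fun p => f (c • p))
      ((fderiv ℝ f (c • x)).comp (c • ContinuousLinearMap.id ℝ (Fin (m+1) → ℝ))) x := by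
    have hs : HasFDerivAt (fun p : Fin (m+1) → ℝ => c • p)
        (c • ContinuousLinearMap.id ℝ (Fin (m+1) → ℝ)) x :=
      (ContinuousLinearMap.id ℝ (Fin (m+1) → ℝ)).hasFDerivAt.const_smul c
    exact ((hdiff (c • x)).hasFDerivAt).comp x hs
  have hB : HasFDerivAt (fun p => f (c • p)) (c ^ k • fderiv ℝ f x) x := by
    have : (fun p => f (c • p)) = fun p => c ^ k • f p := funext fun p => hhom c p
    rw [this]
    exact ((hdiff x).hasFDerivAt).const_smul (c ^ k)
  have := hA.unique hB
  have happ := congrArg (fun (L : (Fin (m+1) → ℝ) →L[ℝ] A) => L (Pi.single w 1)) this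
  simp only [ContinuousLinearMap.coe_comp', Function.comp_apply,
    ContinuousLinearMap.smul_apply, ContinuousLinearMap.coe_smul',
    Pi.smul_apply, ContinuousLinearMap.coe_id', id_eq] at happ
  rw [map_smul] at happ
  exact happ

lemma hom_pdf {f : (Fin (m+1) → ℝ) → A} {k : ℕ} (hf : ContDiff ℝ ⊤ f)
    (hhom : ∀ (c : ℝ) (x : Fin (m+1) → ℝ), f (c • x) = c ^ (k+1) • f x) (w : Fin (m+1)) :
    ∀ (c : ℝ) (x : Fin (m+1) → ℝ), pdf w f (c • x) = c ^ k • pdf w f x := by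
  have key := hom_scale hf hhom w
  have hne : ∀ (c : ℝ), c ≠ 0 → ∀ x, pdf w f (c • x) = c ^ k • pdf w f x := by
    intro c hc x
    have h := key c x
    rw [pow_succ'] at h
    rw [mul_smul] at h
    exact smul_right_injective A hc (by exact h)
  intro c x
  rcases eq_or_ne c 0 with rfl | hc
  · rcases Nat.eq_zero_or_pos k with rfl | hk
    · -- k = 0 : f has degree 1; pdf w f is constant
      simp only [pow_zero, one_smul, zero_smul]
      -- show pdf w f 0 = pdf w f x
      have hcont : Continuous (pdf w f) := (smooth_pdf hf w).continuous
      have htd : Filter.Tendsto (fun c : ℝ => pdf w f (c • x)) (nhdsWithin 0 {0}ᶜ)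
          (nhds (pdf w f 0)) := by
        have : Filter.Tendsto (fun c : ℝ => c • x) (nhdsWithin 0 {0}ᶜ) (nhds 0) := by
          have hbase : Filter.Tendsto (fun c : ℝ => c • x) (nhds 0) (nhds ((0:ℝ) • x)) :=
            (continuous_id.smul continuous_const).tendsto 0
          rw [zero_smul] at hbase
          exact hbase.mono_left nhdsWithin_le_nhds
        exact (hcont.tendsto 0).comp this
      have hconst : Filter.Tendsto (fun c : ℝ => pdf w f (c • x)) (nhdsWithin 0 {0}ᶜ)
          (nhds (pdf w f x)) := by
        apply Filter.Tendsto.congr' _ tendsto_const_nhds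
        filter_upwards [self_mem_nhdsWithin] with c hc
        rw [hne c hc x, pow_zero, one_smul]
      exact tendsto_nhds_unique htd hconst
    · -- k ≥ 1 : pdf w f 0 = 0
      have h0 : pdf w f 0 = 0 := by
        have h := key 2 0
        rw [smul_zero] at h
        have : ((2:ℝ) - 2 ^ (k+1)) • pdf w f 0 = 0 := by
          rw [sub_smul, h, sub_self]
        rcases smul_eq_zero.mp this with h' | h'
        · exfalso
          have h2 : (2:ℝ) ^ (k+1) ≥ 2 ^ 2 := by
            apply pow_le_pow_right₀ (by norm_num)
            omega
          norm_num at h2 h'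
          nlinarith
        · exact h'
      rw [zero_smul, h0, zero_pow (by omega), zero_smul]
  · exact hne c hc x

lemma mono_pdf {f : (Fin (m+1) → ℝ) → A} (hf : ContDiff ℝ ⊤ f)
    (μ : A →L[ℝ] A →L[ℝ] A) (v : Fin (m+1) → A)
    (hmono : ∀ x, ∑ s, μ (v s) (pdf s f x) = 0) (w : Fin (m+1)) :
    ∀ x, ∑ s, μ (v s) (pdf s (pdf w f) x) = 0 := by
  intro x
  have hterm : ∀ s : Fin (m+1), HasFDerivAt (fun p => μ (v s) (pdf s f p))
      ((μ (v s)).comp ((ContinuousLinearMap.apply ℝ A (Pi.single s 1)).comp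
        (fderiv ℝ (fderiv ℝ f) x))) x := fun s =>
    (μ (v s)).hasFDerivAt.comp x (hasfderiv_pdf hf s x)
  have hsum : HasFDerivAt (fun p => ∑ s, μ (v s) (pdf s f p))
      (∑ s, (μ (v s)).comp ((ContinuousLinearMap.apply ℝ A (Pi.single s 1)).comp
        (fderiv ℝ (fderiv ℝ f) x))) x := HasFDerivAt.fun_sum (fun s _ => hterm s)
  have hzero : (fun p => ∑ s, μ (v s) (pdf s f p)) = fun _ => (0 : A) :=
    funext fun p => hmono p
  rw [hzero] at hsum
  have huniq := hsum.unique (hasFDerivAt_const 0 x)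
  have happ := congrArg (fun (L : (Fin (m+1) → ℝ) →L[ℝ] A) => L (Pi.single w 1)) huniq
  simp only [ContinuousLinearMap.sum_apply, ContinuousLinearMap.coe_comp',
    Function.comp_apply, ContinuousLinearMap.zero_apply] at happ
  rw [← happ]
  apply Finset.sum_congr rfl
  intro s _
  congr 1
  -- pdf s (pdf w f) x = fderiv (fderiv f) x (single w 1) (single s 1)
  show fderiv ℝ (pdf w f) x (Pi.single s 1) = _
  rw [(hasfderiv_pdf hf w x).fderiv]
  show fderiv ℝ (fderiv ℝ f) x (Pi.single s 1) (Pi.single w 1) = _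
  rw [sndsymm hf]
  rfl

end Analysis

section Fold
variable {m : ℕ} {A : Type*} [NormedAddCommGroup A] [NormedSpace ℝ A]

lemma smooth_iter {f : (Fin (m+1) → ℝ) → A} (hf : ContDiff ℝ ⊤ f) (w : Fin (m+1)) (n : ℕ) :
    ContDiff ℝ ⊤ ((pdf w)^[n] f) := by
  induction n with
  | zero => exact hf
  | succ n ih => rw [Function.iterate_succ_apply']; exact smooth_pdf ih w

lemma pdf_comm_iter {f : (Fin (m+1) → ℝ) → A} (hf : ContDiff ℝ ⊤ f) (a b : Fin (m+1)) (n : ℕ) :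
    pdf a ((pdf b)^[n] f) = (pdf b)^[n] (pdf a f) := by
  induction n with
  | zero => rfl
  | succ n ih =>
    rw [Function.iterate_succ_apply', Function.iterate_succ_apply']
    rw [pdf_comm (smooth_iter hf b n) a b, ih]

/-- fold of iterated partial derivatives -/
noncomputable def foldSteps (κ : Fin m → ℕ) (l : List (Fin m)) (f : (Fin (m+1) → ℝ) → A) :
    (Fin (m+1) → ℝ) → A :=
  l.foldr (fun j g => (pdf j.succ)^[κ j] g) f

lemma smooth_fold {f : (Fin (m+1) → ℝ) → A} (hf : ContDiff ℝ ⊤ f) (κ : Fin m → ℕ)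
    (l : List (Fin m)) : ContDiff ℝ ⊤ (foldSteps κ l f) := by
  induction l with
  | nil => exact hf
  | cons j tl ih => exact smooth_iter ih j.succ (κ j)

lemma pdf_comm_fold {f : (Fin (m+1) → ℝ) → A} (hf : ContDiff ℝ ⊤ f) (κ : Fin m → ℕ)
    (w : Fin (m+1)) (l : List (Fin m)) :
    pdf w (foldSteps κ l f) = foldSteps κ l (pdf w f) := by
  induction l with
  | nil => rfl
  | cons j tl ih =>
    show pdf w ((pdf j.succ)^[κ j] (foldSteps κ tl f)) = _
    rw [pdf_comm_iter (smooth_fold hf κ tl) w j.succ (κ j), ih]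
    rfl

lemma fold_congr {f : (Fin (m+1) → ℝ) → A} {κ κ' : Fin m → ℕ} {l : List (Fin m)}
    (h : ∀ j ∈ l, κ j = κ' j) : foldSteps κ l f = foldSteps κ' l f := by
  induction l with
  | nil => rfl
  | cons j tl ih =>
    show (pdf j.succ)^[κ j] (foldSteps κ tl f) = (pdf j.succ)^[κ' j] (foldSteps κ' tl f)
    rw [h j (List.mem_cons_self), ih (fun i hi => h i (List.mem_cons_of_mem j hi))]

lemma fold_zero {f : (Fin (m+1) → ℝ) → A} {κ : Fin m → ℕ} {l : List (Fin m)}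
    (h : ∀ j ∈ l, κ j = 0) : foldSteps κ l f = f := by
  induction l with
  | nil => rfl
  | cons j tl ih =>
    show (pdf j.succ)^[κ j] (foldSteps κ tl f) = f
    rw [h j (List.mem_cons_self), Function.iterate_zero_apply,
      ih (fun i hi => h i (List.mem_cons_of_mem j hi))]

lemma fold_step {f : (Fin (m+1) → ℝ) → A} (hf : ContDiff ℝ ⊤ f) (κ : Fin m → ℕ)
    (j0 : Fin m) (l : List (Fin m)) (hnd : l.Nodup) (hmem : j0 ∈ l) :
    foldSteps κ l (pdf j0.succ f) = foldSteps (κ + Pi.single j0 1) l f := by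
  obtain ⟨l1, l2, rfl⟩ := List.append_of_mem hmem
  have hnd2 := hnd
  rw [List.nodup_append] at hnd2
  have hj0l1 : j0 ∉ l1 := by
    intro hc
    exact hnd2.2.2 j0 hc j0 List.mem_cons_self rfl
  have hj0l2 : j0 ∉ l2 := by
    have := hnd2.2.1
    rw [List.nodup_cons] at this
    exact this.1
  have hoff : ∀ i : Fin m, i ≠ j0 → (κ + Pi.single j0 1 : Fin m → ℕ) i = κ i := by
    intro i hi
    simp [Pi.single_eq_of_ne hi]
  show List.foldr _ _ (l1 ++ j0 :: l2) = List.foldr _ _ (l1 ++ j0 :: l2)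
  rw [List.foldr_append, List.foldr_append]
  have inner : List.foldr (fun j g => (pdf j.succ)^[κ j] g) (pdf j0.succ f) (j0 :: l2)
      = List.foldr (fun j g => (pdf j.succ)^[(κ + Pi.single j0 1 : Fin m → ℕ) j] g) f
          (j0 :: l2) := by
    show (pdf j0.succ)^[κ j0] (foldSteps κ l2 (pdf j0.succ f))
        = (pdf j0.succ)^[(κ + Pi.single j0 1 : Fin m → ℕ) j0]
            (foldSteps (κ + Pi.single j0 1) l2 f)
    rw [← pdf_comm_fold hf κ j0.succ l2]
    rw [← Function.iterate_succ_apply]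
    have h1 : (κ + Pi.single j0 1 : Fin m → ℕ) j0 = κ j0 + 1 := by simp
    rw [h1]
    congr 1
    exact fold_congr (fun i hi => (hoff i (fun hc => hj0l2 (hc ▸ hi))).symm)
  show List.foldr (fun j g => (pdf j.succ)^[κ j] g) _ l1 = _
  rw [inner]
  exact fold_congr (fun i hi => (hoff i (fun hc => hj0l1 (hc ▸ hi))).symm)

/-- the Fueter coefficients -/
noncomputable def acoef (f : (Fin (m+1) → ℝ) → A) (κ : Fin m → ℕ) : A :=
  ((List.finRange m).foldr (fun j g => (pdf j.succ)^[κ j] g) f) 0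

lemma acoef_pdf {f : (Fin (m+1) → ℝ) → A} (hf : ContDiff ℝ ⊤ f) (j : Fin m) (κ : Fin m → ℕ) :
    acoef (pdf j.succ f) κ = acoef f (κ + Pi.single j 1) := by
  show (foldSteps κ (List.finRange m) (pdf j.succ f)) 0 = _
  rw [fold_step hf κ j (List.finRange m) (List.nodup_finRange m) (List.mem_finRange j)]
  rfl

lemma acoef_zeroκ (f : (Fin (m+1) → ℝ) → A) : acoef f (fun _ => 0) = f 0 := by
  show (foldSteps (fun _ => 0) (List.finRange m) f) 0 = f 0
  rw [fold_zero (fun j _ => rfl)]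

end Fold

section Main
variable {m : ℕ} {A : Type*} [NormedAddCommGroup A] [NormedSpace ℝ A]
variable (μ : A →L[ℝ] A →L[ℝ] A) (e : A) (v : Fin (m+1) → A)
variable (he : ∀ a : A, μ e a = a ∧ μ a e = a) (hv0 : v 0 = e)

include he hv0 in
theorem MAIN : ∀ (k : ℕ) (f : (Fin (m+1) → ℝ) → A), ContDiff ℝ ⊤ f →
    (∀ (c : ℝ) (x : Fin (m+1) → ℝ), f (c • x) = c ^ k • f x) →
    (∀ x, ∑ s, μ (v s) (pdf s f x) = 0) →
    ∀ x, f x = ∑ κ ∈ Sk m k, (k.factorial : ℝ)⁻¹ • SB μ e v x κ (acoef f κ) := by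
  intro k
  induction k with
  | zero =>
    intro f hf hhom hmono x
    rw [Sk_zero, Finset.sum_singleton, SB_zero μ e v x (by simp), acoef_zeroκ]
    have h0 : f 0 = f x := by
      have := hhom 0 x
      rw [zero_smul, pow_zero, one_smul] at this
      exact this
    rw [h0]
    simp [Nat.factorial]
  | succ k ih =>
    intro f hf hhom hmono x
    -- the partial derivatives
    have hQs : ∀ j : Fin m, ContDiff ℝ ⊤ (pdf j.succ f) := fun j => smooth_pdf hf j.succ
    have hQhom : ∀ j : Fin m, ∀ (c : ℝ) (y : Fin (m+1) → ℝ), pdf j.succ f (c • y) = c ^ k • pdf j.succ f y :=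
      fun j => hom_pdf hf hhom j.succ
    have hQmono : ∀ j : Fin m, ∀ y, ∑ s, μ (v s) (pdf s (pdf j.succ f) y) = 0 :=
      fun j => mono_pdf hf μ v hmono j.succ
    -- Euler + monogenicity
    have heuler := euler hf hhom x
    have hmx := hmono x
    rw [Fin.sum_univ_succ] at hmx
    have hpdf0 : μ (v 0) (pdf 0 f x) = - ∑ j : Fin m, μ (v j.succ) (pdf j.succ f x) := by
      linear_combination (norm := module) hmx
    rw [hv0] at hpdf0
    rw [(he (pdf 0 f x)).1] at hpdf0
    have hkey : ((k:ℝ) + 1) • f x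
        = ∑ j : Fin m, μ (x j.succ • e - x 0 • v j.succ) (pdf j.succ f x) := by
      have hexp : ∀ j : Fin m, μ (x j.succ • e - x 0 • v j.succ) (pdf j.succ f x)
          = x j.succ • pdf j.succ f x - x 0 • μ (v j.succ) (pdf j.succ f x) := by
        intro j
        rw [map_sub, map_smul, map_smul, ContinuousLinearMap.sub_apply,
          ContinuousLinearMap.smul_apply, ContinuousLinearMap.smul_apply,
          (he (pdf j.succ f x)).1]
      rw [Finset.sum_congr rfl (fun j _ => hexp j)]
      rw [Fin.sum_univ_succ] at heuler
      have hcast : ((k:ℝ) + 1) = ((k+1 : ℕ) : ℝ) := by push_cast; ring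
      rw [hcast, ← heuler, hpdf0]
      rw [Finset.sum_sub_distrib, smul_neg, Finset.smul_sum]
      abel
    -- substitute induction hypothesis
    have hIH : ∀ j : Fin m, pdf j.succ f x = ∑ κ ∈ Sk m k,
        (k.factorial : ℝ)⁻¹ • SB μ e v x κ (acoef f (κ + Pi.single j 1)) := by
      intro j
      rw [ih (pdf j.succ f) (hQs j) (hQhom j) (hQmono j) x]
      apply Finset.sum_congr rfl
      intro κ _
      rw [acoef_pdf hf j κ]
    have hkey2 : ((k:ℝ) + 1) • f x = ∑ κ ∈ Sk m (k+1),
        (k.factorial : ℝ)⁻¹ • SB μ e v x κ (acoef f κ) := by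
      rw [hkey]
      have step1 : ∀ j : Fin m, μ (x j.succ • e - x 0 • v j.succ) (pdf j.succ f x)
          = ∑ κ ∈ Sk m k, (k.factorial : ℝ)⁻¹ •
              μ (x j.succ • e - x 0 • v j.succ) (SB μ e v x κ (acoef f (κ + Pi.single j 1))) := by
        intro j
        rw [hIH j, map_sum]
        apply Finset.sum_congr rfl
        intro κ _
        rw [map_smul]
      rw [Finset.sum_congr rfl (fun j _ => step1 j)]
      refine Eq.trans (RX k (fun j κ => (k.factorial : ℝ)⁻¹ •
        μ (x j.succ • e - x 0 • v j.succ) (SB μ e v x κ (acoef f (κ + Pi.single j 1))))).symm ?_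
      apply Finset.sum_congr rfl
      intro κ hκ
      have hκk : ∑ s, κ s = k + 1 := mem_Sk.mp hκ
      rw [SB_rec μ e v x (by omega) (acoef f κ), Finset.smul_sum]
      apply Finset.sum_congr rfl
      intro j hj
      have hj0 : κ j ≠ 0 := (Finset.mem_filter.mp hj).2
      rw [sub_single_add hj0]
    have hk1 : ((k:ℝ) + 1) ≠ 0 := by positivity
    calc f x = ((k:ℝ) + 1)⁻¹ • (((k:ℝ) + 1) • f x) := by rw [inv_smul_smul₀ hk1]
      _ = ((k:ℝ) + 1)⁻¹ • ∑ κ ∈ Sk m (k+1),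
            (k.factorial : ℝ)⁻¹ • SB μ e v x κ (acoef f κ) := by rw [hkey2]
      _ = ∑ κ ∈ Sk m (k+1), ((k+1).factorial : ℝ)⁻¹ • SB μ e v x κ (acoef f κ) := by
          rw [Finset.smul_sum]
          apply Finset.sum_congr rfl
          intro κ _
          rw [smul_smul]
          congr 1
          rw [Nat.factorial_succ]
          push_cast
          rw [mul_inv]

end Main


end FueterAux

/-- Let `P : M → A` be a homogeneous polynomial of degree `k` on the hypercomplex subspace
`M ≅ ℝ^{m+1}` of the real alternative `∗`-algebra `A` which is left monogenic.  Then `P`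
admits the Fueter representation `P(x) = ∑_{|κ|=k} P_κ(x) a_κ` with coefficients
`a_κ = ∂_κ P(0)`, where `P_κ` are the Fueter polynomials (encoded via the canonical list
with `κ j` copies of the index `j`). -/
theorem homogeneous_monogenic_fueter_representation {A : Type*} [NormedAddCommGroup A]
    [NormedSpace ℝ A] [FiniteDimensional ℝ A]
    (μ : A →L[ℝ] A →L[ℝ] A) (e : A)
    (he : ∀ a : A, μ e a = a ∧ μ a e = a)
    (hLA : ∀ a b : A, μ (μ a a) b = μ a (μ a b))
    (hRA : ∀ a b : A, μ (μ a b) b = μ a (μ b b))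
    (m : ℕ) (hm : 1 ≤ m) (v : Fin (m + 1) → A)
    (hv0 : v 0 = e)
    (hvsq : ∀ s, s ≠ 0 → μ (v s) (v s) = -e)
    (hvanti : ∀ s t, s ≠ 0 → t ≠ 0 → s ≠ t → μ (v s) (v t) = -μ (v t) (v s))
    (k : ℕ) (P : ((Fin (m + 1)) → ℝ) → A)
    (hPsmooth : ContDiff ℝ ⊤ P)
    (hPdeg : ∀ p, iteratedFDeriv ℝ (k + 1) P p = 0)
    (hPhom : ∀ (c : ℝ) (x : (Fin (m + 1)) → ℝ), P (c • x) = c ^ k • P x)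
    (hPmono : ∀ x, ∑ s, μ (v s) (fderiv ℝ P x (Pi.single s 1)) = 0)
    (z : Fin (m + 1) → ((Fin (m + 1)) → ℝ) → A)
    (hz : z = fun ℓ p => p ℓ • e - p 0 • v ℓ)
    (Pf : (Fin m → ℕ) → ((Fin (m + 1)) → ℝ) → A)
    (hPf : Pf = fun κ p => (((∑ s, κ s).factorial : ℝ))⁻¹ •
      ∑ l' ∈ ((List.finRange m).flatMap fun j =>
          List.replicate (κ j) j.succ).permutations.toFinset,
        (l'.map (fun i => z i p)).foldr (fun a b => μ a b) e)
    (a : (Fin m → ℕ) → A)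
    (ha : a = fun κ => ((List.finRange m).foldr
      (fun j g => (fun f p => fderiv ℝ f p (Pi.single j.succ 1))^[κ j] g) P) 0) :
    ∀ x, P x = ∑ κ ∈ Finset.filter (fun κ => ∑ s, κ s = k)
        (Fintype.piFinset fun _ : Fin m => Finset.range (k + 1)),
      μ (Pf κ x) (a κ) := by
  subst hz hPf ha
  intro x
  have hmain := FueterAux.MAIN μ e v he hv0 k P hPsmooth hPhom hPmono x
  rw [hmain]
  apply Finset.sum_congr rfl
  intro κ hκ
  have hk : ∑ s, κ s = k := FueterAux.mem_Sk.mp hκ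
  beta_reduce
  rw [hk]
  rw [FueterAux.SB_mu μ e v x he hLA hRA κ (FueterAux.acoef P κ)]
  rw [map_smul, ContinuousLinearMap.smul_apply]
  rfl
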